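/- Let λ = (λ₁,...,λ_k) be a partition of n (λ₁ ≥ λ₂ ≥ ... ≥ λ_k ≥ 1, Σλ_i = n) with λ₁ ≥ (11/12)·n and γ := n − λ₁ ≥ 1. For a cell (i,j) of the Young diagram of λ (1 ≤ i ≤ k, 1 ≤ j ≤ λ_i), the hook length is h_λ(i,j) = (λ_i − j) + (λ'_j − i) + 1, where λ' is the transpose partition (λ'_j = |{ i : λ_i ≥ j }|). Then n! / Π_{(i,j)} h_λ(i,j) ≥ (n/(2γ))^γ. (By the hook length formula, the left-hand side equals the dimension d_λ of the irreducible representation S^λ of S_n, so d_λ ≥ (n/(2(n−λ₁)))^{n−λ₁}.) -/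

import Mathlib

open Finset

private lemma fact_mul_pow_le (a : ℕ) : ∀ g : ℕ, a.factorial * (a+1)^g ≤ (a+g).factorial
  | 0 => by simp
  | g+1 => by
      calc a.factorial * (a+1)^(g+1) = (a.factorial * (a+1)^g) * (a+1) := by ring
      _ ≤ (a+g).factorial * (a+1) := Nat.mul_le_mul_right _ (fact_mul_pow_le a g)
      _ ≤ (a+g).factorial * (a+g+1) := Nat.mul_le_mul_left _ (by omega)
      _ = (a+(g+1)).factorial := by
          rw [show a+(g+1) = (a+g)+1 by ring, Nat.factorial_succ]; ring

theorem hook_length_dimension_lower_bound (n k : ℕ) (hk : 0 < k) (lam : Fin k → ℕ)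
    (hpos : ∀ i, 0 < lam i)
    (hmono : ∀ i j : Fin k, i ≤ j → lam j ≤ lam i)
    (hsum : ∑ i, lam i = n)
    (hlam1 : (11 : ℝ) / 12 * n ≤ (lam ⟨0, hk⟩ : ℝ))
    (hγ : 1 ≤ n - lam ⟨0, hk⟩) :
    ((n : ℝ) / (2 * ((n : ℝ) - (lam ⟨0, hk⟩ : ℝ)))) ^ (n - lam ⟨0, hk⟩) ≤
      (n.factorial : ℝ) /
        ∏ i : Fin k, ∏ j ∈ Finset.range (lam i),
          (((lam i : ℝ) - (j + 1)) +
            (((Finset.univ.filter fun i' : Fin k => j + 1 ≤ lam i').card : ℝ) - (i.1 + 1)) +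
            1) := by
  classical
  set i0 : Fin k := ⟨0, hk⟩ with hi0def
  set L1 := lam i0 with hL1def
  set γ := n - L1 with hγdef
  set lc : ℕ → ℕ := fun c => (Finset.univ.filter fun i' : Fin k => c ≤ lam i').card with hlcdef
  set hN : Fin k → ℕ → ℕ := fun i j => (lam i - (j+1)) + (lc (j+1) - (i.1+1)) + 1 with hhNdef
  have hi0v : i0.1 = 0 := rfl
  have hL1n : L1 ≤ n :=
    hsum ▸ Finset.single_le_sum (f := lam) (fun i _ => Nat.zero_le _) (mem_univ i0)
  have hsum_erase : ∑ i ∈ univ.erase i0, lam i = γ := by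
    have h := Finset.add_sum_erase univ lam (mem_univ i0)
    rw [hsum] at h; omega
  have hk2 : 1 < k := by
    by_contra h
    have he : univ.erase i0 = (∅ : Finset (Fin k)) := by
      apply Finset.eq_empty_of_forall_notMem
      intro i hi
      have h2 := i.2
      exact absurd (Fin.ext (by omega : i.1 = i0.1)) (mem_erase.mp hi).1
    rw [he, Finset.sum_empty] at hsum_erase
    omega
  set i1 : Fin k := ⟨1, hk2⟩ with hi1def
  have hi1mem : i1 ∈ univ.erase i0 := by
    refine mem_erase.mpr ⟨?_, mem_univ _⟩
    intro h
    exact absurd (congrArg Fin.val h) (by simp [hi1def, hi0def])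
  set L2 := lam i1 with hL2def
  have hL2γ : L2 ≤ γ :=
    hsum_erase ▸ Finset.single_le_sum (f := lam) (fun i _ => Nat.zero_le _) hi1mem
  have hL2L1 : L2 ≤ L1 := hmono i0 i1 (by simp [hi0def, hi1def, Fin.le_def])
  have hkγ : k - 1 ≤ γ := by
    have hcard : (univ.erase i0).card = k - 1 := by
      rw [card_erase_of_mem (mem_univ _), card_univ, Fintype.card_fin]
    have h := Finset.card_nsmul_le_sum (univ.erase i0) lam 1 (fun i _ => hpos i)
    rw [hsum_erase, hcard, smul_eq_mul, mul_one] at h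
    omega
  have hlck : ∀ c, lc c ≤ k := fun c => by
    rw [hlcdef]
    simpa using Finset.card_filter_le (univ : Finset (Fin k)) _
  have hlcge : ∀ (i : Fin k) (j : ℕ), j < lam i → i.1 + 1 ≤ lc (j+1) := by
    intro i j hj
    have hsub : Finset.Iic i ⊆ univ.filter fun i' : Fin k => j + 1 ≤ lam i' := by
      intro i' hi'
      exact mem_filter.mpr ⟨mem_univ _,
        le_trans (Nat.succ_le_of_lt hj) (hmono i' i (mem_Iic.mp hi'))⟩
    have h := Finset.card_le_card hsub
    rw [Fin.card_Iic] at h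
    exact h
  set HN : ℕ := ∏ i : Fin k, ∏ j ∈ Finset.range (lam i), hN i j with hHNdef
  have hcast : (∏ i : Fin k, ∏ j ∈ Finset.range (lam i),
      (((lam i : ℝ) - (j + 1)) +
        (((Finset.univ.filter fun i' : Fin k => j + 1 ≤ lam i').card : ℝ) - (i.1 + 1)) +
        1)) = (HN : ℝ) := by
    rw [hHNdef]
    push_cast
    refine Finset.prod_congr rfl fun i _ => Finset.prod_congr rfl fun j hj => ?_
    have hj' : j + 1 ≤ lam i := mem_range.mp hj
    have h2 : i.1 + 1 ≤ lc (j+1) := hlcge i j (mem_range.mp hj)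
    rw [hhNdef, hlcdef] at *
    push_cast [Nat.cast_sub hj', Nat.cast_sub h2]
    ring
  rw [hcast]
  have hNpos : ∀ (i : Fin k) (j : ℕ), 0 < hN i j := fun i j => Nat.succ_pos _
  have hHNpos : 0 < HN := Finset.prod_pos fun i _ => Finset.prod_pos fun j _ => hNpos i j
  have hsplit : HN = (∏ j ∈ Finset.range L1, hN i0 j) *
      ∏ i ∈ univ.erase i0, ∏ j ∈ Finset.range (lam i), hN i j := by
    rw [hHNdef, ← Finset.mul_prod_erase univ _ (mem_univ i0)]
  -- rest of the rows: each hook length is at most γ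
  have hrest : (∏ i ∈ univ.erase i0, ∏ j ∈ Finset.range (lam i), hN i j) ≤ γ ^ γ := by
    calc (∏ i ∈ univ.erase i0, ∏ j ∈ Finset.range (lam i), hN i j)
        ≤ ∏ i ∈ univ.erase i0, γ ^ (lam i) := by
          refine Finset.prod_le_prod' fun i hi => ?_
          have hi0' : i ≠ i0 := (mem_erase.mp hi).1
          have hi1' : 1 ≤ i.1 := by
            rcases Nat.eq_zero_or_pos i.1 with h | h
            · exact absurd (Fin.ext (by rw [h, hi0v])) hi0'
            · exact h
          have hγi : lam i + (k - 1 - i.1) ≤ γ := by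
            have hIci : Finset.Ici i ⊆ univ.erase i0 := by
              intro i' hi'
              refine mem_erase.mpr ⟨?_, mem_univ _⟩
              have h2 : i ≤ i' := mem_Ici.mp hi'
              rw [Fin.le_def] at h2
              intro h
              rw [h, hi0v] at h2
              omega
            have h2 : (∑ i' ∈ Finset.Ici i, lam i') ≤ γ := by
              rw [← hsum_erase]
              exact Finset.sum_le_sum_of_subset hIci
            have h3 : lam i + ∑ i' ∈ Finset.Ioi i, lam i' = ∑ i' ∈ Finset.Ici i, lam i' :=
              Finset.add_sum_Ioi_eq_sum_Ici (f := lam) i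
            have h4 : (Finset.Ioi i).card ≤ ∑ i' ∈ Finset.Ioi i, lam i' := by
              have := Finset.card_nsmul_le_sum (Finset.Ioi i) lam 1 (fun i' _ => hpos i')
              simpa using this
            rw [Fin.card_Ioi] at h4
            omega
          calc (∏ j ∈ Finset.range (lam i), hN i j) ≤ ∏ _j ∈ Finset.range (lam i), γ := by
                refine Finset.prod_le_prod' fun j _ => ?_
                have h5 := hlck (j+1)
                have h6 := hpos i
                have h7 := i.2
                simp only [hhNdef]
                omega
            _ = γ ^ (lam i) := by rw [Finset.prod_const, card_range]
      _ = γ ^ (∑ i ∈ univ.erase i0, lam i) := Finset.prod_pow_eq_pow_sum _ _ _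
      _ = γ ^ γ := by rw [hsum_erase]
  -- first row
  have hrow : (∏ j ∈ Finset.range L1, hN i0 j) ≤ n.descFactorial L2 * (L1 - L2).factorial := by
    have hsplitrow : (∏ j ∈ Finset.range L2, hN i0 j) * (∏ j ∈ Finset.Ico L2 L1, hN i0 j)
        = ∏ j ∈ Finset.range L1, hN i0 j := by
      rw [Finset.range_eq_Ico, Finset.range_eq_Ico]
      exact Finset.prod_Ico_consecutive _ (Nat.zero_le _) hL2L1
    rw [← hsplitrow]
    have h1 : (∏ j ∈ Finset.range L2, hN i0 j) ≤ n.descFactorial L2 := by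
      rw [Nat.descFactorial_eq_prod_range]
      refine Finset.prod_le_prod' fun j hj => ?_
      have hj' : j < L2 := mem_range.mp hj
      have h5 := hlck (j+1)
      simp only [hhNdef]
      omega
    have h2 : (∏ j ∈ Finset.Ico L2 L1, hN i0 j) = (L1 - L2).factorial := by
      have hpt : ∀ j ∈ Finset.Ico L2 L1, hN i0 j = L1 - j := by
        intro j hj
        obtain ⟨hj1, hj2⟩ := mem_Ico.mp hj
        have hfil : (Finset.univ.filter fun i' : Fin k => j + 1 ≤ lam i') = {i0} := by
          ext i'
          simp only [mem_filter, mem_univ, true_and, mem_singleton]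
          constructor
          · intro h
            by_contra hne
            have hi1' : 1 ≤ i'.1 := by
              rcases Nat.eq_zero_or_pos i'.1 with h' | h'
              · exact absurd (Fin.ext (by rw [h', hi0v])) hne
              · exact h'
            have : lam i' ≤ L2 := hmono i1 i' (by simpa [hi1def, Fin.le_def] using hi1')
            omega
          · intro h
            rw [h]
            omega
        have hlc1 : lc (j+1) = 1 := by simp only [hlcdef]; rw [hfil, card_singleton]
        simp only [hhNdef]
        rw [hlc1]
        omega
      rw [Finset.prod_congr rfl hpt]
      have := Finset.prod_nbij' (i := fun j => L1 - j) (j := fun m => L1 - m)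
        (s := Finset.Ico L2 L1) (t := Finset.Ico 1 (L1 - L2 + 1))
        (f := fun j => L1 - j) (g := fun m => m)
        (fun a ha => by simp only [mem_Ico] at ha ⊢; omega)
        (fun a ha => by simp only [mem_Ico] at ha ⊢; omega)
        (fun a ha => by simp only [mem_Ico] at ha; show L1 - (L1 - a) = a; omega)
        (fun a ha => by simp only [mem_Ico] at ha; show L1 - (L1 - a) = a; omega)
        (fun a ha => rfl)
      rw [this, Finset.prod_Ico_id_eq_factorial]
    calc (∏ j ∈ Finset.range L2, hN i0 j) * (∏ j ∈ Finset.Ico L2 L1, hN i0 j)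
        ≤ n.descFactorial L2 * (∏ j ∈ Finset.Ico L2 L1, hN i0 j) :=
          Nat.mul_le_mul_right _ h1
      _ = n.descFactorial L2 * (L1 - L2).factorial := by rw [h2]
  -- main natural-number inequality
  have hmain : HN * (L1 - L2 + 1) ^ γ ≤ n.factorial * γ ^ γ := by
    have hHNle : HN ≤ n.descFactorial L2 * (L1 - L2).factorial * γ ^ γ := by
      rw [hsplit]
      exact Nat.mul_le_mul hrow hrest
    have hfac : (L1 - L2).factorial * (L1 - L2 + 1) ^ γ ≤ (n - L2).factorial := by
      have h := fact_mul_pow_le (L1 - L2) γ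
      rwa [show L1 - L2 + γ = n - L2 by omega] at h
    calc HN * (L1 - L2 + 1) ^ γ
        ≤ n.descFactorial L2 * (L1 - L2).factorial * γ ^ γ * (L1 - L2 + 1) ^ γ :=
          Nat.mul_le_mul_right _ hHNle
      _ = n.descFactorial L2 * ((L1 - L2).factorial * (L1 - L2 + 1) ^ γ) * γ ^ γ := by ring
      _ ≤ n.descFactorial L2 * (n - L2).factorial * γ ^ γ :=
          Nat.mul_le_mul_right _ (Nat.mul_le_mul_left _ hfac)
      _ = n.factorial * γ ^ γ := by
          rw [mul_comm (n.descFactorial L2), Nat.factorial_mul_descFactorial (by omega : L2 ≤ n)]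
  -- pass to the reals
  have hγpos : 0 < γ := hγ
  have hγR : (n : ℝ) - (L1 : ℝ) = (γ : ℝ) := by
    rw [hγdef, Nat.cast_sub hL1n]
  have hγRpos : (0 : ℝ) < (γ : ℝ) := by exact_mod_cast hγpos
  rw [hγR, le_div_iff₀ (by exact_mod_cast hHNpos)]
  have hbase : (n : ℝ) / (2 * (γ : ℝ)) ≤ ((L1 - L2 + 1 : ℕ) : ℝ) / (γ : ℝ) := by
    rw [div_le_div_iff₀ (by positivity) hγRpos]
    have hc : ((L1 - L2 + 1 : ℕ) : ℝ) = (L1 : ℝ) - (L2 : ℝ) + 1 := by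
      rw [Nat.cast_add, Nat.cast_sub hL2L1]; norm_num
    have hL2R : (L2 : ℝ) ≤ (γ : ℝ) := by exact_mod_cast hL2γ
    rw [hc]
    rw [← hγR] at hL2R
    nlinarith [hγRpos]
  have hmainR : (HN : ℝ) * ((L1 - L2 + 1 : ℕ) : ℝ) ^ γ ≤ (n.factorial : ℝ) * (γ : ℝ) ^ γ := by
    exact_mod_cast hmain
  calc ((n : ℝ) / (2 * (γ : ℝ))) ^ γ * (HN : ℝ)
      ≤ (((L1 - L2 + 1 : ℕ) : ℝ) / (γ : ℝ)) ^ γ * (HN : ℝ) := by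
        refine mul_le_mul_of_nonneg_right (pow_le_pow_left₀ (by positivity) hbase _) ?_
        positivity
    _ = (HN : ℝ) * ((L1 - L2 + 1 : ℕ) : ℝ) ^ γ / (γ : ℝ) ^ γ := by
        rw [div_pow]; ring
    _ ≤ (n.factorial : ℝ) * (γ : ℝ) ^ γ / (γ : ℝ) ^ γ := by
        apply div_le_div_of_nonneg_right hmainR
        positivity
    _ = (n.factorial : ℝ) := by
        field_simp
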